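/- (Uniform L² dissipativity via differential inequality) Let p > 2, c > 0, L > 0, and let y : [0,∞) → [0,∞) be absolutely continuous satisfying y'(t) + 2c·y(t)^{p/2} ≤ 2L·y(t) for a.e. t > 0. Then there exist constants T > 0 and β > 0, depending only on p, c, L (not on y(0)), such that y(t) ≤ β for all t ≥ T. -/

import Mathlib

/-- Uniform L² dissipativity: if `y' + 2c y^{p/2} ≤ 2L y` with `p > 2`, then
there are `T, β > 0` depending only on `p, c, L` (not on `y(0)`) with
`y(t) ≤ β` for all `t ≥ T`. -/
theorem stmt_4 (p c L : ℝ) (hp : 2 < p) (hc : 0 < c) (hL : 0 < L) :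
    ∃ T β : ℝ, 0 < T ∧ 0 < β ∧
      ∀ (y y' : ℝ → ℝ),
        (∀ t, 0 ≤ t → HasDerivAt y (y' t) t) →
        (∀ t, 0 ≤ t → 0 ≤ y t) →
        (∀ t, 0 < t → y' t + 2 * c * (y t) ^ (p / 2) ≤ 2 * L * y t) →
        ∀ t, T ≤ t → y t ≤ β := by
  set q : ℝ := p / 2 - 1 with hqdef
  have hq : 0 < q := by simp only [hqdef]; linarith
  have hbase : (0:ℝ) < 2 * L / c := by positivity
  set M : ℝ := (2 * L / c) ^ (1/q) with hMdef
  have hM : 0 < M := Real.rpow_pos_of_pos hbase _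
  have hMq : M ^ q = 2 * L / c := by
    rw [hMdef, ← Real.rpow_mul hbase.le, one_div, inv_mul_cancel₀ hq.ne', Real.rpow_one]
  set T : ℝ := M ^ (-q) / (q * c) with hTdef
  have hMnq : 0 < M ^ (-q) := Real.rpow_pos_of_pos hM _
  have hT : 0 < T := by positivity
  refine ⟨T, M, hT, hM, ?_⟩
  intro y y' hderiv hnn hineq t ht
  have ht0 : 0 < t := lt_of_lt_of_le hT ht
  by_contra hyt
  push_neg at hyt
  -- continuity of y on [0, t]
  have hcont : ContinuousOn y (Set.Icc 0 t) := fun r hr =>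
    ((hderiv r hr.1).continuousAt).continuousWithinAt
  -- key derivative bound when y r > M
  have key : ∀ r, 0 < r → M < y r → y' r ≤ -c * (y r) ^ (p/2) := by
    intro r hr hyr
    have h1 := hineq r hr
    have hyrpos : 0 < y r := hM.trans hyr
    have hpow : (y r) ^ (p/2) = (y r) ^ q * y r := by
      rw [show p/2 = q + 1 by ring, Real.rpow_add hyrpos, Real.rpow_one]
    have h2 : 2 * L / c ≤ (y r) ^ q := by
      rw [← hMq]; exact Real.rpow_le_rpow hM.le hyr.le hq.le
    have h3 : 2 * L * y r ≤ c * ((y r) ^ (p/2)) := by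
      rw [hpow]
      have h4 : (2 * L / c) * y r ≤ (y r) ^ q * y r :=
        mul_le_mul_of_nonneg_right h2 hyrpos.le
      have h5 : c * ((2 * L / c) * y r) ≤ c * ((y r) ^ q * y r) :=
        mul_le_mul_of_nonneg_left h4 hc.le
      calc 2 * L * y r = c * ((2 * L / c) * y r) := by field_simp
        _ ≤ c * ((y r) ^ q * y r) := h5
    linarith
  -- Case 1: y dips to ≤ M somewhere on [0, t]
  by_cases hA : ∃ s ∈ Set.Icc (0:ℝ) t, y s ≤ M
  · set A : Set ℝ := Set.Icc 0 t ∩ y ⁻¹' Set.Iic M with hAdef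
    have hAclosed : IsClosed A :=
      hcont.preimage_isClosed_of_isClosed isClosed_Icc isClosed_Iic
    have hAne : A.Nonempty := by
      obtain ⟨s, hs1, hs2⟩ := hA
      exact ⟨s, hs1, hs2⟩
    have hAbdd : BddAbove A := ⟨t, fun r hr => hr.1.2⟩
    set s : ℝ := sSup A with hsdef
    have hsA : s ∈ A := hAclosed.csSup_mem hAne hAbdd
    have hs0 : 0 ≤ s := hsA.1.1
    have hst : s ≤ t := hsA.1.2
    have hys : y s ≤ M := hsA.2
    have hgt : ∀ r, s < r → r ≤ t → M < y r := by
      intro r hr1 hr2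
      by_contra h
      push_neg at h
      have : r ∈ A := ⟨⟨hs0.trans hr1.le, hr2⟩, h⟩
      exact absurd (le_csSup hAbdd this) (not_le.mpr hr1)
    have hslt : s < t := by
      rcases lt_or_eq_of_le hst with h | h
      · exact h
      · exact absurd (h ▸ hys) (not_le.mpr hyt)
    have hanti : AntitoneOn y (Set.Icc s t) := by
      apply antitoneOn_of_deriv_nonpos (convex_Icc s t)
      · exact hcont.mono (Set.Icc_subset_Icc_left hs0)
      · intro r hr
        rw [interior_Icc] at hr
        exact ((hderiv r (hs0.trans hr.1.le)).differentiableAt).differentiableWithinAt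
      · intro r hr
        rw [interior_Icc] at hr
        have hr0 : 0 < r := lt_of_le_of_lt hs0 hr.1
        rw [(hderiv r hr0.le).deriv]
        have := key r hr0 (hgt r hr.1 hr.2.le)
        have hpos : 0 < (y r) ^ (p/2) :=
          Real.rpow_pos_of_pos (hM.trans (hgt r hr.1 hr.2.le)) _
        nlinarith
    have : y t ≤ y s := hanti ⟨le_refl s, hst⟩ ⟨hst, le_refl t⟩ hst
    linarith
  -- Case 2: y > M on all of [0, t]
  · push_neg at hA
    have hAgt : ∀ r ∈ Set.Icc (0:ℝ) t, M < y r := hA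
    set u : ℝ → ℝ := fun r => (y r) ^ (-q) with hudef
    set g : ℝ → ℝ := fun r => u r - q * c * r with hgdef
    have hypos : ∀ r ∈ Set.Icc (0:ℝ) t, 0 < y r := fun r hr => hM.trans (hAgt r hr)
    have hgmono : MonotoneOn g (Set.Icc 0 t) := by
      apply monotoneOn_of_deriv_nonneg (convex_Icc 0 t)
      · apply ContinuousOn.sub
        · exact hcont.rpow_const fun r hr => Or.inl (hypos r hr).ne'
        · exact (continuous_const.mul continuous_id).continuousOn
      · intro r hr
        rw [interior_Icc] at hr
        have hr' : r ∈ Set.Icc (0:ℝ) t := ⟨hr.1.le, hr.2.le⟩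
        have hd : HasDerivAt u (y' r * (-q) * (y r) ^ (-q - 1)) r :=
          (hderiv r hr.1.le).rpow_const (Or.inl (hypos r hr').ne')
        exact ((hd.sub ((hasDerivAt_id r).const_mul (q * c))).differentiableAt).differentiableWithinAt
      · intro r hr
        rw [interior_Icc] at hr
        have hr' : r ∈ Set.Icc (0:ℝ) t := ⟨hr.1.le, hr.2.le⟩
        have hyr : 0 < y r := hypos r hr'
        have hd : HasDerivAt u (y' r * (-q) * (y r) ^ (-q - 1)) r :=
          (hderiv r hr.1.le).rpow_const (Or.inl hyr.ne')
        have hdg : HasDerivAt g (y' r * (-q) * (y r) ^ (-q - 1) - q * c) r := by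
          exact (hd.sub ((hasDerivAt_id r).const_mul (q * c))).congr_deriv (by ring)
        rw [hdg.deriv]
        have hkey := key r hr.1 (hAgt r hr')
        have hp1 : 0 < (y r) ^ (-q - 1) := Real.rpow_pos_of_pos hyr _
        have hmul : (y r) ^ (-q - 1) * (y r) ^ (p/2) = 1 := by
          rw [← Real.rpow_add hyr, show -q - 1 + p/2 = 0 by simp only [hqdef]; ring,
            Real.rpow_zero]
        have h6 : (-c * (y r) ^ (p/2)) * (-q) * (y r) ^ (-q - 1) = q * c := by
          have : c * q * ((y r) ^ (-q - 1) * (y r) ^ (p/2)) = c * q := by rw [hmul]; ring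
          nlinarith [this]
        have h7 : y' r * (-q) * (y r) ^ (-q - 1) ≥
            (-c * (y r) ^ (p/2)) * (-q) * (y r) ^ (-q - 1) := by
          have h8 : y' r * (-q) ≥ (-c * (y r) ^ (p/2)) * (-q) := by nlinarith
          exact mul_le_mul_of_nonneg_right h8 hp1.le
        rw [h6] at h7
        linarith
    have h0t : (0:ℝ) ∈ Set.Icc (0:ℝ) t := ⟨le_refl 0, ht0.le⟩
    have htt : t ∈ Set.Icc (0:ℝ) t := ⟨ht0.le, le_refl t⟩
    have hg := hgmono h0t htt ht0.le
    have hu0 : 0 < u 0 := Real.rpow_pos_of_pos (hypos 0 h0t) _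
    have hut : u t ≥ q * c * t := by
      simp only [hgdef, hudef] at hg ⊢
      have : (y 0) ^ (-q) - q * c * 0 ≤ (y t) ^ (-q) - q * c * t := hg
      simp only [hudef] at hu0
      linarith
    have hqcT : q * c * T = M ^ (-q) := by
      rw [hTdef]; field_simp
    have h9 : M ^ (-q) ≤ u t := by
      have : q * c * T ≤ q * c * t := by
        apply mul_le_mul_of_nonneg_left ht (by positivity)
      linarith [hqcT ▸ this]
    have h10 : u t < M ^ (-q) := by
      simp only [hudef]
      exact Real.rpow_lt_rpow_of_neg hM hyt (neg_neg_iff_pos.mpr hq)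
    linarith
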